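/- In the subset take-away game on a 3-element set A, the second player wins; in particular, replying to any first move X with the complementary set A \ X yields a position that is a second-player win. -/

import Mathlib

variable {α : Type*} [DecidableEq α]

/-- Playing move `a` in position `K` removes every simplex containing `a`. -/
def gameMove (K : Finset (Finset α)) (a : Finset α) : Finset (Finset α) :=
  K.filter fun b => ¬ a ⊆ b

/-- The player to move wins position `K` (normal play). -/
def FirstWins (K : Finset (Finset α)) : Prop :=
  ∃ a : {a // a ∈ K}, ¬ FirstWins (gameMove K a.1)
termination_by K.card
decreasing_by
  refine Finset.card_lt_card ?_
  refine (Finset.ssubset_iff_of_subset (Finset.filter_subset _ _)).mpr ?_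
  exact ⟨a.1, a.2, by simp⟩

/-- Standard starting position: all proper non-empty subsets of `A`. -/
def startPos (A : Finset α) : Finset (Finset α) :=
  A.powerset.filter fun s => s ≠ ∅ ∧ s ≠ A

/-- The filled simplex: all non-empty subsets of `A`, including `A`. -/
def fullSimplex (A : Finset α) : Finset (Finset α) :=
  A.powerset.filter fun s => s ≠ ∅

/-- `K` is an abstract simplicial complex of non-empty sets. -/
def IsComplex (K : Finset (Finset α)) : Prop :=
  ∀ a ∈ K, a ≠ ∅ ∧ ∀ b ⊆ a, b ≠ ∅ → b ∈ K

lemma gameMove_ssubset {K : Finset (Finset α)} {a : Finset α} (h : a ∈ K) :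
    gameMove K a ⊂ K := by
  refine (Finset.ssubset_iff_of_subset (Finset.filter_subset _ _)).mpr ?_
  exact ⟨a, h, by simp [gameMove]⟩

lemma FirstWins_iff (K : Finset (Finset α)) :
    FirstWins K ↔ ∃ a ∈ K, ¬ FirstWins (gameMove K a) := by
  rw [FirstWins]
  exact ⟨fun ⟨a, ha⟩ => ⟨a.1, a.2, ha⟩, fun ⟨a, h, ha⟩ => ⟨⟨a, h⟩, ha⟩⟩

/-- fuel-based boolean version, kernel-computable -/
def fwB : ℕ → Finset (Finset α) → Bool
  | 0, _ => false
  | n+1, K => decide (∃ a ∈ K, fwB n (gameMove K a) = false)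

lemma fwB_iff : ∀ (n : ℕ) (K : Finset (Finset α)), K.card ≤ n →
    (fwB n K = true ↔ FirstWins K) := by
  intro n
  induction n with
  | zero =>
      intro K hK
      have hKe : K = ∅ := Finset.card_eq_zero.mp (Nat.le_zero.mp hK)
      subst hKe
      rw [FirstWins_iff]
      simp [fwB]
  | succ n ih =>
      intro K hK
      rw [FirstWins_iff, fwB, decide_eq_true_iff]
      apply exists_congr; intro a
      apply and_congr_right; intro ha
      have hc : (gameMove K a).card ≤ n :=
        Nat.le_of_lt_succ (lt_of_lt_of_le (Finset.card_lt_card (gameMove_ssubset ha)) hK)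
      rw [← ih _ hc, Bool.eq_false_iff]


variable {β : Type*} [DecidableEq β]

/-- Mapping finsets along an embedding, as an embedding. -/
def FF (f : β ↪ α) : Finset β ↪ Finset α := ⟨Finset.map f, Finset.map_injective f⟩

lemma gameMove_map (f : β ↪ α) (K : Finset (Finset β)) (a : Finset β) :
    gameMove (K.map (FF f)) (a.map f) = (gameMove K a).map (FF f) := by
  unfold gameMove
  rw [Finset.filter_map]
  congr 1
  apply Finset.filter_congr
  intro c _
  simp [FF, Finset.map_subset_map]

lemma firstWins_map (f : β ↪ α) (K : Finset (Finset β)) :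
    FirstWins (K.map (FF f)) ↔ FirstWins K := by
  induction K using Finset.strongInduction with
  | _ K ih =>
    rw [FirstWins_iff, FirstWins_iff]
    constructor
    · rintro ⟨a, ha, hwa⟩
      rw [Finset.mem_map] at ha
      obtain ⟨b, hb, rfl⟩ := ha
      refine ⟨b, hb, fun hw => hwa ?_⟩
      rw [show (FF f) b = b.map f from rfl, gameMove_map]
      exact (ih _ (gameMove_ssubset hb)).mpr hw
    · rintro ⟨b, hb, hwb⟩
      refine ⟨b.map f, Finset.mem_map_of_mem _ hb, fun hw => hwb ?_⟩
      rw [gameMove_map] at hw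
      exact (ih _ (gameMove_ssubset hb)).mp hw

lemma mapSdiff (f : β ↪ α) (s t : Finset β) :
    (s \ t).map f = s.map f \ t.map f := by
  ext a
  simp only [Finset.mem_map, Finset.mem_sdiff]
  constructor
  · rintro ⟨b, ⟨hbs, hbt⟩, rfl⟩
    exact ⟨⟨b, hbs, rfl⟩, fun ⟨c, hc, hce⟩ => hbt (f.injective hce ▸ hc)⟩
  · rintro ⟨⟨b, hbs, rfl⟩, hn⟩
    exact ⟨b, ⟨hbs, fun hbt => hn ⟨b, hbt, rfl⟩⟩, rfl⟩

lemma startPos_map (f : β ↪ α) (s : Finset β) :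
    startPos (s.map f) = (startPos s).map (FF f) := by
  ext b
  simp only [startPos, Finset.mem_filter, Finset.mem_powerset, Finset.mem_map,
    Finset.subset_map_iff]
  constructor
  · rintro ⟨⟨u, hu, rfl⟩, hne, hns⟩
    exact ⟨u, ⟨hu, fun h => hne (by simp [h]), fun h => hns (by rw [h])⟩, rfl⟩
  · rintro ⟨u, ⟨hu, hne, hns⟩, rfl⟩
    exact ⟨⟨u, hu, rfl⟩, fun h => hne (Finset.map_eq_empty.mp h), fun h => hns (Finset.map_injective f h)⟩

theorem stmt2 (A : Finset α) (h : A.card = 3) :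
    ¬ FirstWins (startPos A) ∧
    (∀ X ∈ startPos A, ¬ FirstWins (gameMove (gameMove (startPos A) X) (A \ X))) := by
  classical
  have e : A ≃ Fin 3 := A.equivFinOfCardEq h
  let f : Fin 3 ↪ α := ⟨fun i => ((e.symm i : A) : α),
    fun i j hij => e.symm.injective (Subtype.ext hij)⟩
  have hA : (Finset.univ : Finset (Fin 3)).map f = A := by
    ext a
    simp only [Finset.mem_map, Finset.mem_univ, true_and]
    constructor
    · rintro ⟨i, rfl⟩; exact (e.symm i).2
    · intro ha; exact ⟨e ⟨a, ha⟩, by show ((e.symm (e ⟨a, ha⟩) : A) : α) = a; simp⟩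
  have d1 : fwB 6 (startPos (Finset.univ : Finset (Fin 3))) = false := by decide
  have d2 : ∀ u ∈ startPos (Finset.univ : Finset (Fin 3)),
      fwB 6 (gameMove (gameMove (startPos Finset.univ) u) (Finset.univ \ u)) = false := by
    decide
  have dcard : (startPos (Finset.univ : Finset (Fin 3))).card ≤ 6 := by decide
  constructor
  · rw [← hA, startPos_map, firstWins_map]
    intro hw
    have := (fwB_iff 6 _ dcard).mpr hw
    rw [d1] at this
    exact Bool.false_ne_true this
  · intro X hX
    rw [← hA, startPos_map] at hX
    obtain ⟨u, hu, rfl⟩ := Finset.mem_map.mp hX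
    rw [← hA, startPos_map]
    rw [show (FF f) u = u.map f from rfl, gameMove_map, ← mapSdiff, gameMove_map,
      firstWins_map]
    intro hw
    have hcard : (gameMove (gameMove (startPos (Finset.univ : Finset (Fin 3))) u)
        (Finset.univ \ u)).card ≤ 6 := by
      refine le_trans (Finset.card_le_card ?_) dcard
      exact (Finset.filter_subset _ _).trans (Finset.filter_subset _ _)
    have := (fwB_iff 6 _ hcard).mpr hw
    rw [d2 u hu] at this
    exact Bool.false_ne_true this
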